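/- Let S_1,…,S_{n+1} be mutually independent real-valued random variables. For i ∈ {1,…,n}, let 𝐒 = (S_1,…,S_{n+1}) and let 𝐒^i = (S_1,…,S_{i−1}, S_{n+1}, S_{i+1},…,S_n, S_i) be the vector obtained by swapping coordinates i and n+1. Then the total variation distance between the law of 𝐒^i and the law of 𝐒 satisfies TV(𝐒^i, 𝐒) ≤ 2 · TV(S_i, S_{n+1}), where TV(S_i, S_{n+1}) is the total variation distance between the marginal laws of S_i and S_{n+1}. -/

import Mathlib

open MeasureTheory ENNReal

noncomputable section

/-- Total variation distance between two measures:
`TV(μ, ν) = sup_{A measurable} |μ(A) − ν(A)|`. -/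
def tvDist {α : Type*} [MeasurableSpace α] (μ ν : Measure α) : ℝ :=
  ⨆ A : {A : Set α // MeasurableSet A}, |(μ A.1).toReal - (ν A.1).toReal|

section Aux

variable {α : Type*} [MeasurableSpace α]

instance : Nonempty {A : Set α // MeasurableSet A} := ⟨⟨∅, MeasurableSet.empty⟩⟩

lemma bddAbove_tv (μ ν : Measure α) [IsProbabilityMeasure μ] [IsProbabilityMeasure ν] :
    BddAbove (Set.range fun A : {A : Set α // MeasurableSet A} =>
      |(μ A.1).toReal - (ν A.1).toReal|) := by
  refine ⟨1, ?_⟩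
  rintro x ⟨A, rfl⟩
  have h1 : (μ A.1).toReal ≤ 1 := by
    simpa using ENNReal.toReal_mono one_ne_top (prob_le_one (μ := μ) (s := A.1))
  have h2 : (ν A.1).toReal ≤ 1 := by
    simpa using ENNReal.toReal_mono one_ne_top (prob_le_one (μ := ν) (s := A.1))
  have h3 : (0:ℝ) ≤ (μ A.1).toReal := ENNReal.toReal_nonneg
  have h4 : (0:ℝ) ≤ (ν A.1).toReal := ENNReal.toReal_nonneg
  rw [abs_sub_le_iff]
  constructor <;> linarith

lemma abs_le_tvDist (μ ν : Measure α) [IsProbabilityMeasure μ] [IsProbabilityMeasure ν]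
    {A : Set α} (hA : MeasurableSet A) :
    |(μ A).toReal - (ν A).toReal| ≤ tvDist μ ν :=
  le_ciSup (bddAbove_tv μ ν) ⟨A, hA⟩

lemma tvDist_le (μ ν : Measure α) {c : ℝ}
    (h : ∀ A : Set α, MeasurableSet A → |(μ A).toReal - (ν A).toReal| ≤ c) :
    tvDist μ ν ≤ c :=
  ciSup_le fun A => h A.1 A.2

lemma tvDist_nonneg (μ ν : Measure α) [IsProbabilityMeasure μ] [IsProbabilityMeasure ν] :
    0 ≤ tvDist μ ν :=
  le_trans (abs_nonneg _) (abs_le_tvDist μ ν MeasurableSet.empty)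

lemma tvDist_comm (μ ν : Measure α) : tvDist μ ν = tvDist ν μ := by
  unfold tvDist
  exact iSup_congr fun A => abs_sub_comm _ _

lemma tvDist_triangle (μ₁ μ₂ μ₃ : Measure α) [IsProbabilityMeasure μ₁]
    [IsProbabilityMeasure μ₂] [IsProbabilityMeasure μ₃] :
    tvDist μ₁ μ₃ ≤ tvDist μ₁ μ₂ + tvDist μ₂ μ₃ :=
  tvDist_le _ _ fun A hA => (abs_sub_le _ _ _).trans
    (add_le_add (abs_le_tvDist _ _ hA) (abs_le_tvDist _ _ hA))

lemma lintegral_le_lintegral_add_tv (ρ₁ ρ₂ : Measure α) [IsProbabilityMeasure ρ₁]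
    [IsProbabilityMeasure ρ₂] (f : α → ℝ≥0∞) (hf : Measurable f) (hf1 : ∀ a, f a ≤ 1) :
    ∫⁻ a, f a ∂ρ₁ ≤ (∫⁻ a, f a ∂ρ₂) + ENNReal.ofReal (tvDist ρ₁ ρ₂) := by
  set g : α → ℝ := fun a => (f a).toReal with hg_def
  have hg : Measurable g := hf.ennreal_toReal
  have hg1 : ∀ a, g a ≤ 1 := fun a => by
    simpa using ENNReal.toReal_mono one_ne_top (hf1 a)
  have hof : ∀ a, ENNReal.ofReal (g a) = f a := fun a =>
    ENNReal.ofReal_toReal (ne_top_of_le_ne_top one_ne_top (hf1 a))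
  have key : ∀ ρ : Measure α, ∫⁻ a, f a ∂ρ = ∫⁻ t in Set.Ioi (0:ℝ), ρ {a | t < g a} := by
    intro ρ
    rw [← lintegral_eq_lintegral_meas_lt ρ
      (Filter.Eventually.of_forall fun a => ENNReal.toReal_nonneg) hg.aemeasurable]
    exact lintegral_congr fun a => (hof a).symm
  rw [key ρ₁, key ρ₂]
  set c := ENNReal.ofReal (tvDist ρ₁ ρ₂) with hc
  calc ∫⁻ t in Set.Ioi (0:ℝ), ρ₁ {a | t < g a}
      ≤ ∫⁻ t in Set.Ioi (0:ℝ),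
          (ρ₂ {a | t < g a} + (Set.Ioo (0:ℝ) 1).indicator (fun _ => c) t) := by
        refine lintegral_mono_ae ?_
        rw [ae_restrict_iff' measurableSet_Ioi]
        refine Filter.Eventually.of_forall fun t ht => ?_
        by_cases h1 : t < 1
        · rw [Set.indicator_of_mem (Set.mem_Ioo.mpr ⟨Set.mem_Ioi.mp ht, h1⟩)]
          have hA : MeasurableSet {a | t < g a} := measurableSet_lt measurable_const hg
          have habs := abs_le_tvDist ρ₁ ρ₂ hA
          have h2 : (ρ₁ {a | t < g a}).toReal ≤ (ρ₂ {a | t < g a}).toReal + tvDist ρ₁ ρ₂ := by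
            have h3 := (abs_sub_le_iff.mp habs).1
            linarith
          calc ρ₁ {a | t < g a} = ENNReal.ofReal ((ρ₁ {a | t < g a}).toReal) :=
                (ENNReal.ofReal_toReal (measure_ne_top _ _)).symm
            _ ≤ ENNReal.ofReal ((ρ₂ {a | t < g a}).toReal + tvDist ρ₁ ρ₂) :=
                ENNReal.ofReal_le_ofReal h2
            _ ≤ ENNReal.ofReal ((ρ₂ {a | t < g a}).toReal) + c := ENNReal.ofReal_add_le
            _ = ρ₂ {a | t < g a} + c := by rw [ENNReal.ofReal_toReal (measure_ne_top _ _)]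
        · have hempty : {a | t < g a} = (∅ : Set α) := by
            ext a
            simp only [Set.mem_setOf_eq, Set.mem_empty_iff_false, iff_false, not_lt]
            exact (hg1 a).trans (not_lt.mp h1)
          rw [hempty]
          simp
    _ = (∫⁻ t in Set.Ioi (0:ℝ), ρ₂ {a | t < g a})
        + ∫⁻ t in Set.Ioi (0:ℝ), (Set.Ioo (0:ℝ) 1).indicator (fun _ => c) t :=
        lintegral_add_right _ (measurable_const.indicator measurableSet_Ioo)
    _ = (∫⁻ t in Set.Ioi (0:ℝ), ρ₂ {a | t < g a}) + c := by
        rw [lintegral_indicator measurableSet_Ioo, setLIntegral_const,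
          Measure.restrict_apply measurableSet_Ioo,
          Set.inter_eq_left.mpr Set.Ioo_subset_Ioi_self, Real.volume_Ioo]
        norm_num

lemma prod_abs_le_tvDist {β : Type*} [MeasurableSpace β] (ρ₁ ρ₂ : Measure α)
    [IsProbabilityMeasure ρ₁] [IsProbabilityMeasure ρ₂] (τ : Measure β) [IsProbabilityMeasure τ]
    {B : Set (α × β)} (hB : MeasurableSet B) :
    |((ρ₁.prod τ) B).toReal - ((ρ₂.prod τ) B).toReal| ≤ tvDist ρ₁ ρ₂ := by
  have hf : Measurable fun x => τ (Prod.mk x ⁻¹' B) := measurable_measure_prodMk_left hB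
  have hf1 : ∀ x, τ (Prod.mk x ⁻¹' B) ≤ 1 := fun x => prob_le_one
  have hfin : ∀ (m : Measure α) [IsProbabilityMeasure m],
      (∫⁻ x, τ (Prod.mk x ⁻¹' B) ∂m) ≠ ⊤ := by
    intro m _
    refine ne_top_of_le_ne_top one_ne_top ?_
    refine le_trans (lintegral_mono hf1) ?_
    simp
  have key : ∀ (m₁ m₂ : Measure α) [IsProbabilityMeasure m₁] [IsProbabilityMeasure m₂],
      (∫⁻ x, τ (Prod.mk x ⁻¹' B) ∂m₁).toReal - (∫⁻ x, τ (Prod.mk x ⁻¹' B) ∂m₂).toReal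
        ≤ tvDist m₁ m₂ := by
    intro m₁ m₂ _ _
    have h := lintegral_le_lintegral_add_tv m₁ m₂ _ hf hf1
    have h1 := ENNReal.toReal_mono
      (ENNReal.add_ne_top.mpr ⟨hfin m₂, ENNReal.ofReal_ne_top⟩) h
    rw [ENNReal.toReal_add (hfin m₂) ENNReal.ofReal_ne_top,
      ENNReal.toReal_ofReal (tvDist_nonneg m₁ m₂)] at h1
    linarith
  rw [Measure.prod_apply hB, Measure.prod_apply hB, abs_sub_le_iff]
  exact ⟨key ρ₁ ρ₂, (tvDist_comm ρ₁ ρ₂) ▸ key ρ₂ ρ₁⟩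

lemma tvDist_pi_le {n : ℕ} (ν μ : Fin (n + 1) → Measure ℝ)
    [∀ j, IsProbabilityMeasure (ν j)] [∀ j, IsProbabilityMeasure (μ j)]
    (k : Fin (n + 1)) (h : ∀ j, j ≠ k → ν j = μ j) :
    tvDist (Measure.pi ν) (Measure.pi μ) ≤ tvDist (ν k) (μ k) := by
  have hτ : (fun j => ν (k.succAbove j)) = fun j => μ (k.succAbove j) :=
    funext fun j => h _ (Fin.succAbove_ne k j)
  set e := MeasurableEquiv.piFinSuccAbove (fun _ : Fin (n + 1) => ℝ) k with he
  refine tvDist_le _ _ fun A hA => ?_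
  have hBm : MeasurableSet (e.symm ⁻¹' A) := e.symm.measurable hA
  have happ : ∀ (ρ : Fin (n + 1) → Measure ℝ) (_ : ∀ j, IsProbabilityMeasure (ρ j)),
      Measure.pi ρ A = ((ρ k).prod (Measure.pi fun j => ρ (k.succAbove j))) (e.symm ⁻¹' A) := by
    intro ρ _
    rw [← (measurePreserving_piFinSuccAbove ρ k).map_eq, Measure.map_apply e.measurable hBm]
    congr 1
    ext x
    simp
  rw [happ ν inferInstance, happ μ inferInstance, hτ]
  exact prod_abs_le_tvDist (ν k) (μ k) _ hBm

lemma map_joint_eq_pi {Ω : Type*} [MeasurableSpace Ω] (P : Measure Ω) [IsProbabilityMeasure P]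
    {ι : Type*} [Fintype ι] (S : ι → Ω → ℝ) (hS : ∀ i, Measurable (S i))
    (hindep : ProbabilityTheory.iIndepFun (m := fun _ : ι => (inferInstance : MeasurableSpace ℝ)) S P) :
    P.map (fun ω (j : ι) => S j ω) = Measure.pi fun j => P.map (S j) := by
  haveI : ∀ j, IsProbabilityMeasure (P.map (S j)) := fun j =>
    Measure.isProbabilityMeasure_map (hS j).aemeasurable
  symm
  apply Measure.pi_eq
  intro s hs
  have hmeas : Measurable fun ω (j : ι) => S j ω := measurable_pi_iff.mpr hS
  rw [Measure.map_apply hmeas (MeasurableSet.univ_pi hs)]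
  have hpre : (fun ω (j : ι) => S j ω) ⁻¹' Set.pi Set.univ s = ⋂ j ∈ Finset.univ, S j ⁻¹' s j := by
    ext ω
    simp [Set.mem_univ_pi]
  rw [hpre, hindep.measure_inter_preimage_eq_mul Finset.univ (fun j _ => hs j)]
  exact Finset.prod_congr rfl fun j _ => (Measure.map_apply (hS j) (hs j)).symm

lemma pi_map_comp_perm {n : ℕ} (μ : Fin (n + 1) → Measure ℝ)
    [∀ j, IsProbabilityMeasure (μ j)] (σ : Equiv.Perm (Fin (n + 1))) :
    (Measure.pi μ).map (fun g (j : Fin (n + 1)) => g (σ j)) = Measure.pi fun j => μ (σ j) := by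
  haveI : ∀ j, IsProbabilityMeasure ((fun j => μ (σ j)) j) := fun j => inferInstance
  symm
  apply Measure.pi_eq
  intro s hs
  have hm : Measurable fun (g : Fin (n + 1) → ℝ) (j : Fin (n + 1)) => g (σ j) :=
    measurable_pi_iff.mpr fun j => measurable_pi_apply _
  rw [Measure.map_apply hm (MeasurableSet.univ_pi hs)]
  have hpre : (fun g (j : Fin (n + 1)) => g (σ j)) ⁻¹' Set.pi Set.univ s
      = Set.pi Set.univ fun j => s (σ.symm j) := by
    ext g
    simp only [Set.mem_preimage, Set.mem_univ_pi]
    constructor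
    · intro hg j
      have := hg (σ.symm j)
      rwa [Equiv.apply_symm_apply] at this
    · intro hg j
      have := hg (σ j)
      rwa [Equiv.symm_apply_apply] at this
  rw [hpre, Measure.pi_pi, ← Equiv.prod_comp σ fun j => μ j (s (σ.symm j))]
  exact Finset.prod_congr rfl fun j _ => by rw [Equiv.symm_apply_apply]

end Aux

/-- **For independent scores, the TV distance between the swapped score vector and the
original score vector is at most twice the TV distance of the swapped marginals.** -/
theorem tv_swap_le_two_tv
    {Ω : Type*} [MeasurableSpace Ω] (P : Measure Ω) [IsProbabilityMeasure P]
    (n : ℕ) (S : Fin (n + 1) → Ω → ℝ) (hS : ∀ i, Measurable (S i))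
    (hindep : ProbabilityTheory.iIndepFun
      (m := fun _ : Fin (n + 1) => (inferInstance : MeasurableSpace ℝ)) S P)
    (i : Fin n) :
    tvDist (P.map fun ω => fun j => S (Equiv.swap i.castSucc (Fin.last n) j) ω)
        (P.map fun ω => fun j => S j ω)
      ≤ 2 * tvDist (P.map (S i.castSucc)) (P.map (S (Fin.last n))) := by
  classical
  set σ : Equiv.Perm (Fin (n + 1)) := Equiv.swap i.castSucc (Fin.last n) with hσdef
  set μ : Fin (n + 1) → Measure ℝ := fun j => P.map (S j) with hμdef
  haveI : ∀ j, IsProbabilityMeasure (μ j) := fun j =>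
    Measure.isProbabilityMeasure_map (hS j).aemeasurable
  have hjoint : P.map (fun ω (j : Fin (n + 1)) => S j ω) = Measure.pi μ :=
    map_joint_eq_pi P S hS hindep
  have hswap : (P.map fun ω => fun j => S (σ j) ω) = Measure.pi fun j => μ (σ j) := by
    have hm : Measurable fun (g : Fin (n + 1) → ℝ) (j : Fin (n + 1)) => g (σ j) :=
      measurable_pi_iff.mpr fun j => measurable_pi_apply _
    have hmeas : Measurable fun ω (j : Fin (n + 1)) => S j ω := measurable_pi_iff.mpr hS
    have hcomp : (fun ω => fun j => S (σ j) ω)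
        = (fun g (j : Fin (n + 1)) => g (σ j)) ∘ (fun ω j => S j ω) := rfl
    rw [hcomp, ← Measure.map_map hm hmeas, hjoint, pi_map_comp_perm]
  rw [hswap, hjoint]
  haveI : ∀ j, IsProbabilityMeasure ((fun j => μ (σ j)) j) := fun j => inferInstance
  set η : Fin (n + 1) → Measure ℝ := Function.update μ i.castSucc (μ (Fin.last n)) with hηdef
  haveI hηprob : ∀ j, IsProbabilityMeasure (η j) := by
    intro j
    rcases eq_or_ne j i.castSucc with rfl | hj
    · rw [hηdef, Function.update_self]
      infer_instance
    · rw [hηdef, Function.update_of_ne hj]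
      infer_instance
  have hne : i.castSucc ≠ Fin.last n := (Fin.castSucc_lt_last i).ne
  have h1 : tvDist (Measure.pi fun j => μ (σ j)) (Measure.pi η)
      ≤ tvDist (μ i.castSucc) (μ (Fin.last n)) := by
    have key := tvDist_pi_le (fun j => μ (σ j)) η (Fin.last n) ?_
    · have e1 : μ (σ (Fin.last n)) = μ i.castSucc := by
        rw [hσdef, Equiv.swap_apply_right]
      have e2 : η (Fin.last n) = μ (Fin.last n) := Function.update_of_ne (Ne.symm hne) _ _
      rwa [e1, e2] at key
    · intro j hjl
      show μ (σ j) = η j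
      rcases eq_or_ne j i.castSucc with rfl | hj
      · rw [hσdef, Equiv.swap_apply_left, hηdef, Function.update_self]
      · rw [hσdef, Equiv.swap_apply_of_ne_of_ne hj hjl, hηdef, Function.update_of_ne hj]
  have h2 : tvDist (Measure.pi η) (Measure.pi μ)
      ≤ tvDist (μ i.castSucc) (μ (Fin.last n)) := by
    have key := tvDist_pi_le η μ i.castSucc fun j hj => Function.update_of_ne hj _ _
    rwa [show η i.castSucc = μ (Fin.last n) from Function.update_self _ _ _,
      tvDist_comm (μ (Fin.last n)) (μ i.castSucc)] at key
  have htri := tvDist_triangle (Measure.pi fun j => μ (σ j)) (Measure.pi η) (Measure.pi μ)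
  linarith
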